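/- For every positive integer n and every integer i with 0 ≤ i ≤ n, the polynomial k^n can be written in the basis of binomial coefficient polynomials as k^n = Σ_{i=0}^{n} A(n,i) · C(k+n-i, n), where A(n,i) = Σ_{j=0}^{i} (-1)^j · C(n+1, j) · (i-j)^n is the Eulerian number. -/

import Mathlib

/-- Eulerian number `A(n,i) = Σ_{j=0}^{i} (-1)^j C(n+1,j) (i-j)^n`. -/
def eulerianA (n i : ℕ) : ℤ :=
  ∑ j ∈ Finset.range (i + 1), (-1 : ℤ) ^ j * ((n + 1).choose j : ℤ) * ((i - j : ℕ) : ℤ) ^ n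

open Finset

private lemma lemU_of_W (n : ℕ)
    (hW : ∀ t : ℕ, ∑ j ∈ range (t + 1),
      (-1 : ℤ) ^ j * (n.choose j : ℤ) * ((n + (t - j)).choose n : ℤ) = 1) :
    ∀ s : ℕ, ∑ j ∈ range (s + 1 + 1),
      (-1 : ℤ) ^ j * ((n + 1).choose j : ℤ) * ((n + (s + 1 - j)).choose n : ℤ) = 0 := by
  intro s
  rw [Finset.sum_range_succ']
  have hsplit : ∀ j ∈ range (s + 1),
      (-1 : ℤ) ^ (j+1) * ((n + 1).choose (j+1) : ℤ) * ((n + (s + 1 - (j+1))).choose n : ℤ) =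
      (-((-1 : ℤ) ^ j * (n.choose j : ℤ) * ((n + (s - j)).choose n : ℤ))) +
      ((-1 : ℤ) ^ (j+1) * (n.choose (j+1) : ℤ) * ((n + (s + 1 - (j+1))).choose n : ℤ)) := by
    intro j hj
    rw [Nat.succ_sub_succ, Nat.choose_succ_succ]
    push_cast
    ring
  rw [Finset.sum_congr rfl hsplit, Finset.sum_add_distrib]
  have h1 := hW s
  have h2 := hW (s + 1)
  rw [Finset.sum_range_succ'] at h2
  rw [Finset.sum_neg_distrib, h1]
  simp only [pow_zero, Nat.choose_zero_right, Nat.cast_one, one_mul, Nat.sub_zero] at h2 ⊢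
  linarith [h2]

private lemma lemW : ∀ n t : ℕ,
    ∑ j ∈ range (t + 1), (-1 : ℤ) ^ j * (n.choose j : ℤ) * ((n + (t - j)).choose n : ℤ) = 1
  | 0, t => by
    rw [Finset.sum_eq_single 0]
    · simp
    · intro j hj hj0
      simp [Nat.choose_eq_zero_of_lt (Nat.pos_of_ne_zero hj0)]
    · simp
  | (n+1), 0 => by simp
  | (n+1), (t+1) => by
    have hsplit : ∀ j ∈ range (t + 1 + 1),
        (-1 : ℤ) ^ j * ((n + 1).choose j : ℤ) * ((n + 1 + (t + 1 - j)).choose (n + 1) : ℤ) =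
        ((-1 : ℤ) ^ j * ((n + 1).choose j : ℤ) * ((n + (t + 1 - j)).choose n : ℤ)) +
        ((-1 : ℤ) ^ j * ((n + 1).choose j : ℤ) * ((n + (t + 1 - j)).choose (n + 1) : ℤ)) := by
      intro j hj
      have : n + 1 + (t + 1 - j) = (n + (t + 1 - j)) + 1 := by omega
      rw [this, Nat.choose_succ_succ]
      push_cast
      ring
    rw [Finset.sum_congr rfl hsplit, Finset.sum_add_distrib]
    have hU := lemU_of_W n (lemW n) t
    rw [hU, zero_add]
    rw [Finset.sum_range_succ]
    have hlast : ((n + (t + 1 - (t + 1))).choose (n + 1) : ℤ) = 0 := by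
      simp [Nat.choose_eq_zero_of_lt]
    rw [hlast]
    have hmid : ∀ j ∈ range (t + 1),
        (-1 : ℤ) ^ j * ((n + 1).choose j : ℤ) * ((n + (t + 1 - j)).choose (n + 1) : ℤ) =
        (-1 : ℤ) ^ j * ((n + 1).choose j : ℤ) * ((n + 1 + (t - j)).choose (n + 1) : ℤ) := by
      intro j hj
      simp only [mem_range] at hj
      have : n + (t + 1 - j) = n + 1 + (t - j) := by omega
      rw [this]
    rw [Finset.sum_congr rfl hmid, lemW (n+1) t]
    ring
  termination_by n t => (n, t)

private lemma lemD : ∀ c m : ℕ, c < m →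
    ∑ j ∈ range (m + 1), (-1 : ℤ) ^ j * (m.choose j : ℤ) * (j : ℤ) ^ c = 0 := by
  intro c
  induction c using Nat.strong_induction_on with
  | _ c ih =>
    intro m hcm
    match c, m, hcm with
    | 0, m, hcm =>
      simp only [pow_zero, mul_one]
      exact Int.alternating_sum_range_choose_of_ne (by omega)
    | (c+1), (m+1), hcm =>
      rw [Finset.sum_range_succ']
      simp only [pow_zero, Nat.cast_zero, zero_pow (Nat.succ_ne_zero c), mul_zero, add_zero]
      have hterm : ∀ j ∈ range (m + 1),
          (-1 : ℤ) ^ (j+1) * ((m+1).choose (j+1) : ℤ) * ((j:ℤ)+1) ^ (c+1) =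
          -((m:ℤ)+1) * ((-1 : ℤ) ^ j * (m.choose j : ℤ) * ((j:ℤ)+1) ^ c) := by
        intro j hj
        have h := Nat.add_one_mul_choose_eq m j
        have h2 : ((m+1 : ℕ) : ℤ) * (m.choose j : ℤ) = ((m+1).choose (j+1) : ℤ) * ((j+1 : ℕ) : ℤ) := by
          exact_mod_cast congrArg (Nat.cast : ℕ → ℤ) h
        push_cast at h2
        have : ((j:ℤ)+1)^(c+1) = ((j:ℤ)+1)^c * ((j:ℤ)+1) := by ring
        rw [this]
        linear_combination ((-1:ℤ)^j * ((j:ℤ)+1)^c) * h2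
      push_cast
      rw [Finset.sum_congr rfl hterm, ← Finset.mul_sum]
      have hinner : ∑ j ∈ range (m + 1), (-1 : ℤ) ^ j * (m.choose j : ℤ) * ((j:ℤ)+1) ^ c = 0 := by
        have hexp : ∀ j ∈ range (m + 1),
            (-1 : ℤ) ^ j * (m.choose j : ℤ) * ((j:ℤ)+1) ^ c =
            ∑ e ∈ range (c + 1), (c.choose e : ℤ) * ((-1 : ℤ) ^ j * (m.choose j : ℤ) * (j:ℤ) ^ e) := by
          intro j hj
          rw [add_pow, Finset.mul_sum]
          exact Finset.sum_congr rfl fun e he => by push_cast; ring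
        rw [Finset.sum_congr rfl hexp, Finset.sum_comm]
        apply Finset.sum_eq_zero
        intro e he
        simp only [mem_range] at he
        rw [← Finset.mul_sum, ih e he m (by omega), mul_zero]
      rw [hinner, mul_zero]
private lemma eulerianA_eq_zero (n i : ℕ) (h : n + 1 ≤ i) : eulerianA n i = 0 := by
  unfold eulerianA
  have hsub : range (n + 2) ⊆ range (i + 1) := by
    apply Finset.range_subset_range.mpr; omega
  have hzero : ∀ j ∈ range (i + 1), j ∉ range (n + 2) →
      (-1 : ℤ) ^ j * ((n + 1).choose j : ℤ) * ((i - j : ℕ) : ℤ) ^ n = 0 := by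
    intro j _ hj
    simp only [mem_range, not_lt] at hj
    rw [Nat.choose_eq_zero_of_lt (by omega)]
    simp
  rw [← Finset.sum_subset hsub hzero]
  have hterm : ∀ j ∈ range (n + 2),
      (-1 : ℤ) ^ j * ((n + 1).choose j : ℤ) * ((i - j : ℕ) : ℤ) ^ n =
      ∑ e ∈ range (n + 1),
        ((n.choose e : ℤ) * (i : ℤ) ^ e * (-1 : ℤ) ^ (n - e)) *
          ((-1 : ℤ) ^ j * ((n + 1).choose j : ℤ) * (j : ℤ) ^ (n - e)) := by
    intro j hj
    simp only [mem_range] at hj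
    rw [Nat.cast_sub (by omega : j ≤ i), sub_eq_add_neg, add_pow, Finset.mul_sum]
    refine Finset.sum_congr rfl fun e he => ?_
    rw [neg_pow]
    push_cast
    ring
  rw [Finset.sum_congr rfl hterm, Finset.sum_comm]
  apply Finset.sum_eq_zero
  intro e he
  simp only [mem_range] at he
  rw [← Finset.mul_sum, lemD (n - e) (n + 1) (by omega), mul_zero]

/-- The h*-vector of `k^n` is given by Eulerian numbers:
`k^n = Σ_{i=0}^{n} A(n,i) · C(k+n-i, n)`. -/
theorem hstar_pow_eq_eulerian (n : ℕ) (hn : 1 ≤ n) (k : ℕ) :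
    (k : ℤ) ^ n =
      ∑ i ∈ Finset.range (n + 1), eulerianA n i * ((k + n - i).choose n : ℤ) := by
  set N := n + k with hN
  have step1 : ∑ i ∈ range (n + 1), eulerianA n i * ((k + n - i).choose n : ℤ)
      = ∑ i ∈ range (N + 1), eulerianA n i * ((k + n - i).choose n : ℤ) := by
    apply Finset.sum_subset (Finset.range_subset_range.mpr (by omega))
    intro i hi hi'
    simp only [mem_range, not_lt] at hi hi'
    rw [eulerianA_eq_zero n i (by omega), zero_mul]
  have step2 : ∑ i ∈ range (N + 1), eulerianA n i * ((k + n - i).choose n : ℤ)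
      = ∑ i ∈ range (N + 1), ∑ j ∈ range (i + 1),
        (-1 : ℤ) ^ j * ((n + 1).choose j : ℤ) * ((i - j : ℕ) : ℤ) ^ n *
          ((k + n - i).choose n : ℤ) := by
    refine Finset.sum_congr rfl fun i _ => ?_
    rw [eulerianA, Finset.sum_mul]
  have step3 : ∑ i ∈ range (N + 1), ∑ j ∈ range (i + 1),
        (-1 : ℤ) ^ j * ((n + 1).choose j : ℤ) * ((i - j : ℕ) : ℤ) ^ n *
          ((k + n - i).choose n : ℤ)
      = ∑ j ∈ range (N + 1), ∑ i ∈ Finset.Ico j (N + 1),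
        (-1 : ℤ) ^ j * ((n + 1).choose j : ℤ) * ((i - j : ℕ) : ℤ) ^ n *
          ((k + n - i).choose n : ℤ) := by
    apply Finset.sum_comm'
    intro i j
    simp only [mem_range, Finset.mem_Ico]
    omega
  have step4 : ∀ j ∈ range (N + 1),
      (∑ i ∈ Finset.Ico j (N + 1),
        (-1 : ℤ) ^ j * ((n + 1).choose j : ℤ) * ((i - j : ℕ) : ℤ) ^ n *
          ((k + n - i).choose n : ℤ))
      = ∑ m ∈ range (N + 1 - j),
        (-1 : ℤ) ^ j * ((n + 1).choose j : ℤ) * (m : ℤ) ^ n *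
          ((k + n - (j + m)).choose n : ℤ) := by
    intro j _
    rw [Finset.sum_Ico_eq_sum_range]
    refine Finset.sum_congr rfl fun m _ => ?_
    congr 2
    · congr 1
      omega
  have step5 : ∑ j ∈ range (N + 1), ∑ m ∈ range (N + 1 - j),
        (-1 : ℤ) ^ j * ((n + 1).choose j : ℤ) * (m : ℤ) ^ n *
          ((k + n - (j + m)).choose n : ℤ)
      = ∑ m ∈ range (N + 1), ∑ j ∈ range (N + 1 - m),
        (-1 : ℤ) ^ j * ((n + 1).choose j : ℤ) * (m : ℤ) ^ n *
          ((k + n - (j + m)).choose n : ℤ) := by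
    apply Finset.sum_comm'
    intro j m
    simp only [mem_range]
    omega
  have hJk : ∑ j ∈ range (N + 1 - k),
      (-1 : ℤ) ^ j * ((n + 1).choose j : ℤ) * (k : ℤ) ^ n *
        ((k + n - (j + k)).choose n : ℤ) = (k : ℤ) ^ n := by
    rw [Finset.sum_eq_single 0]
    · have : k + n - (0 + k) = n := by omega
      simp [this]
    · intro j hj hj0
      simp only [mem_range] at hj
      have : k + n - (j + k) < n := by omega
      rw [Nat.choose_eq_zero_of_lt this]
      simp
    · intro h
      exfalso
      apply h
      simp only [mem_range]
      omega
  have hJm : ∀ m ∈ range (N + 1), m ≠ k →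
      ∑ j ∈ range (N + 1 - m),
        (-1 : ℤ) ^ j * ((n + 1).choose j : ℤ) * (m : ℤ) ^ n *
          ((k + n - (j + m)).choose n : ℤ) = 0 := by
    intro m hm hmk
    simp only [mem_range] at hm
    rcases lt_or_gt_of_ne hmk with hlt | hgt
    · -- m < k
      obtain ⟨s, hs⟩ : ∃ s, k - m = s + 1 := ⟨k - m - 1, by omega⟩
      have hle : range (s + 1 + 1) ⊆ range (N + 1 - m) := Finset.range_subset_range.mpr (by omega)
      rw [← Finset.sum_subset hle]
      · have : ∀ j ∈ range (s + 1 + 1),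
            (-1 : ℤ) ^ j * ((n + 1).choose j : ℤ) * (m : ℤ) ^ n *
              ((k + n - (j + m)).choose n : ℤ) =
            (m : ℤ) ^ n * ((-1 : ℤ) ^ j * ((n + 1).choose j : ℤ) *
              ((n + (s + 1 - j)).choose n : ℤ)) := by
          intro j hj
          simp only [mem_range] at hj
          have : k + n - (j + m) = n + (s + 1 - j) := by omega
          rw [this]; ring
        rw [Finset.sum_congr rfl this, ← Finset.mul_sum]
        rw [lemU_of_W n (lemW n) s, mul_zero]
      · intro j hj hj'
        simp only [mem_range, not_lt] at hj hj'
        have : k + n - (j + m) < n := by omega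
        rw [Nat.choose_eq_zero_of_lt this, Nat.cast_zero, mul_zero]
    · -- m > k
      apply Finset.sum_eq_zero
      intro j _
      have : k + n - (j + m) < n := by omega
      rw [Nat.choose_eq_zero_of_lt this, Nat.cast_zero, mul_zero]
  rw [step1, step2, step3, Finset.sum_congr rfl step4, step5,
    Finset.sum_eq_single k hJm (fun h => absurd (Finset.mem_range.mpr (by omega)) h), hJk]
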